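/- For n ≥ 2 and δ = √((n+2)/n), the polynomial S_n(x) = C_{n−1}(x)·(2n+1+δxn) − C_{n−2}(x)·(n+1)·x (with C_m = C_m^{(3/2)}) has no root in common with R_n(x) = C_n(x) + δ·C_{n−1}(x); that is, at every root x_i of R_n, S_n(x_i) ≠ 0, so the weights w_i = 2(n+1)(2n+1)/(R_n'(x_i)·S_n(x_i)) of formula (15) are well defined. -/

import Mathlib

open Polynomial

/-- The Legendre polynomial of degree `n` (Rodrigues' formula). -/
noncomputable def legendre (n : ℕ) : Polynomial ℝ :=
  C ((1 : ℝ) / (2 ^ n * n.factorial)) * derivative^[n] ((X ^ 2 - 1) ^ n)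

/-- The Gegenbauer polynomial `C_n^{(3/2)}(x) = P_{n+1}'(x)`. -/
noncomputable def gegenbauer32 (n : ℕ) : Polynomial ℝ := derivative (legendre (n + 1))

/-- `δ = √((n+2)/n)`. -/
noncomputable def delta (n : ℕ) : ℝ := Real.sqrt (((n : ℝ) + 2) / (n : ℝ))

/-- Formula (12): the node polynomial `R_n = C_n + δ·C_{n−1}`. -/
noncomputable def Rpoly (n : ℕ) : Polynomial ℝ :=
  gegenbauer32 n + C (delta n) * gegenbauer32 (n - 1)

/-- Formula (13): the companion polynomial
`S_n = C_{n−1}·(2n+1+δxn) − C_{n−2}·(n+1)·x`. -/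
noncomputable def Spoly (n : ℕ) : Polynomial ℝ :=
  gegenbauer32 (n - 1) * (C (2 * (n : ℝ) + 1) + C (delta n * (n : ℝ)) * X) -
    gegenbauer32 (n - 2) * C ((n : ℝ) + 1) * X

private noncomputable def u (n : ℕ) : ℝ[X] := (X ^ 2 - 1) ^ n
private noncomputable def cc (n : ℕ) : ℝ := (1 : ℝ) / (2 ^ n * n.factorial)

private lemma leg_def (n : ℕ) : legendre n = C (cc n) * derivative^[n] (u n) := rfl

private lemma iter_succ (k : ℕ) (p : ℝ[X]) :
    derivative^[k+1] p = derivative^[k] (derivative p) :=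
  Function.iterate_succ_apply _ _ _

private lemma iter_succ' (k : ℕ) (p : ℝ[X]) :
    derivative^[k+1] p = derivative (derivative^[k] p) :=
  Function.iterate_succ_apply' _ _ _

private lemma iter_comm (k : ℕ) (p : ℝ[X]) :
    derivative (derivative^[k] p) = derivative^[k] (derivative p) :=
  (Function.iterate_succ_apply' _ _ _).symm.trans (Function.iterate_succ_apply _ _ _)

private lemma iter_add (k : ℕ) (p q : ℝ[X]) :
    derivative^[k] (p + q) = derivative^[k] p + derivative^[k] q :=
  iterate_map_add derivative k p q

private lemma du (n : ℕ) : derivative (u (n+1)) = C (2*((n:ℝ)+1)) * X * u n := by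
  unfold u
  rw [derivative_pow]
  have : derivative ((X:ℝ[X])^2 - 1) = C 2 * X := by
    simp [derivative_pow, map_ofNat]
  rw [this]
  push_cast [map_add, map_mul, map_one, map_ofNat, map_natCast]
  ring

private lemma cc_succ (n : ℕ) : cc (n+1) * (2*((n:ℝ)+1)) = cc n := by
  unfold cc
  rw [Nat.factorial_succ, pow_succ]
  push_cast
  have h1 : (2:ℝ)^n ≠ 0 := by positivity
  have h2 : ((n.factorial : ℝ)) ≠ 0 := by positivity
  field_simp

private lemma iterX : ∀ (k : ℕ) (p : ℝ[X]),
    derivative^[k+1] (X * p)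
      = X * derivative^[k+1] p + (((k:ℝ[X])+1)) * derivative^[k] p := by
  intro k
  induction k with
  | zero => intro p; simp [derivative_mul]; ring
  | succ k ih =>
    intro p
    rw [iter_succ (k+1) (X*p), derivative_mul, derivative_X, one_mul, iter_add,
      ih (derivative p), ← iter_succ, ← iter_succ]
    push_cast
    ring

private lemma iterQ : ∀ (k : ℕ) (p : ℝ[X]),
    derivative^[k+2] ((X^2-1) * p) = (X^2-1) * derivative^[k+2] p
      + 2*((k:ℝ[X])+2) * X * derivative^[k+1] p
      + ((k:ℝ[X])+2)*((k:ℝ[X])+1) * derivative^[k] p := by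
  intro k
  induction k with
  | zero =>
    intro p
    simp only [show ∀ q : ℝ[X], derivative^[0+2] q = derivative (derivative q) from fun _ => rfl,
      show ∀ q : ℝ[X], derivative^[0+1] q = derivative q from fun _ => rfl,
      Function.iterate_zero_apply]
    simp [derivative_mul, derivative_pow, map_ofNat]
    ring
  | succ k ih =>
    intro p
    rw [show k+1+2 = (k+2)+1 from rfl, iter_succ,
      show derivative ((X^2-1 : ℝ[X]) * p) = (X^2-1) * derivative p + C 2 * X * p by
        rw [derivative_mul]; simp [derivative_pow]; ring,
      iter_add, ih (derivative p), mul_assoc (C (2:ℝ)), iterate_derivative_C_mul,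
      show k+2 = (k+1)+1 from rfl, iterX (k+1) p, ← iter_succ, ← iter_succ, ← iter_succ]
    rw [map_ofNat C 2]
    push_cast
    ring

private lemma hcC (n : ℕ) : C (cc (n+1)) * C (2*((n:ℝ)+1)) = C (cc n) := by
  rw [← C_mul, cc_succ]

private lemma legA (n : ℕ) : derivative (legendre (n+1))
    = X * derivative (legendre n) + ((n:ℝ[X])+1) * legendre n := by
  rw [leg_def, leg_def, derivative_C_mul, iter_comm, du, mul_assoc,
    iterate_derivative_C_mul, iterX n (u n), ← mul_assoc, ← mul_assoc, hcC,
    derivative_C_mul, iter_comm, iter_succ n (u n)]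
  ring

private lemma usucc (n : ℕ) : u (n+1) = (X^2-1) * u n := by
  unfold u; rw [pow_succ]; ring

private lemma hbase (n : ℕ) : (X^2-1) * derivative (u (n+1))
    = C (2*((n:ℝ)+1)) * (X * u (n+1)) := by
  rw [du, usucc]; ring

private lemma legD : ∀ m : ℕ, (X^2-1) * derivative^[m+2] (u (m+1))
    = ((m:ℝ[X])+1)*((m:ℝ[X])+2) * derivative^[m] (u (m+1)) := by
  intro m
  match m with
  | 0 =>
    have h1 : u 1 = (X:ℝ[X])^2 - 1 := by unfold u; ring
    have h2 : derivative^[0+2] (u 1) = C 2 := by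
      rw [show (0:ℕ)+2 = 2 from rfl]
      rw [show derivative^[2] (u 1) = derivative (derivative (u 1)) from rfl, h1]
      simp [derivative_pow, map_ofNat]
    rw [h2, h1]
    simp only [Function.iterate_zero_apply]
    rw [map_ofNat C 2]
    push_cast
    ring
  | m+1 =>
    have h := congrArg (derivative^[m+2]) (hbase (m+1))
    rw [iterQ m (derivative (u (m+2))), ← iter_succ, ← iter_succ, ← iter_succ,
      iterate_derivative_C_mul, iterX (m+1) (u (m+2))] at h
    push_cast [map_mul, map_add, map_one, map_ofNat, map_natCast] at h ⊢
    linear_combination h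

private lemma leg_zero : legendre 0 = 1 := by simp [legendre]

private lemma leg_one : legendre 1 = X := by
  simp [legendre, derivative_pow]
  rw [← mul_assoc, ← C_mul]
  norm_num

private lemma hcC2 (m : ℕ) : C (cc (m+2)) * C (2*((m:ℝ)+2)) = C (cc (m+1)) := by
  rw [← C_mul]
  congr 1
  have := cc_succ (m+1)
  push_cast at this
  linarith [this]

private lemma legE : ∀ n : ℕ, ((n:ℝ[X])+1) * legendre (n+1)
    = (X^2-1) * derivative (legendre n) + ((n:ℝ[X])+1) * X * legendre n := by
  intro n
  match n with
  | 0 => rw [leg_zero, leg_one]; simp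
  | m+1 =>
    have hD := legD m
    have hc := hcC2 m
    rw [leg_def (m+2), usucc (m+1), iterQ m (u (m+1)),
      leg_def (m+1), derivative_C_mul, ← iter_succ']
    push_cast [map_mul, map_add, map_one, map_ofNat, map_natCast] at hc ⊢
    linear_combination (-(((m:ℝ[X])+2) * C (cc (m+2)))) * hD
      + ((X^2-1) * derivative^[m+2] (u (m+1))
        + (((m:ℝ[X])+2)) * X * derivative^[m+1] (u (m+1))) * hc

private lemma legB (n : ℕ) : X * derivative (legendre (n+1))
    = ((n:ℝ[X])+1) * legendre (n+1) + derivative (legendre n) := by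
  linear_combination X * legA n - legE n

private lemma gegenRec (k : ℕ) : ((k:ℝ[X])+2) * gegenbauer32 (k+2)
    = (2*(k:ℝ[X])+5) * X * gegenbauer32 (k+1) - ((k:ℝ[X])+3) * gegenbauer32 k := by
  unfold gegenbauer32
  have h1 := legA (k+2)
  have h2 := legB (k+1)
  push_cast at h1 h2
  linear_combination ((k:ℝ[X])+2) * h1 - ((k:ℝ[X])+3) * h2

private lemma leg_eval_one : ∀ n : ℕ, (legendre n).eval 1 = 1 := by
  intro n
  induction n with
  | zero => rw [leg_zero]; simp
  | succ n ih =>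
    have hn : ((n:ℝ)+1) ≠ 0 := by positivity
    have h := congrArg (eval 1) (legE n)
    simp only [eval_mul, eval_add, eval_sub, eval_pow, eval_X, eval_one, eval_natCast,
      one_pow, sub_self, zero_mul, mul_one, zero_add] at h
    have h' : ((n:ℝ)+1) * (legendre (n+1)).eval 1 = ((n:ℝ)+1) * (legendre n).eval 1 := by
      linarith [h]
    rw [mul_left_cancel₀ hn h', ih]

private lemma leg_eval_neg_one : ∀ n : ℕ, (legendre n).eval (-1) = (-1)^n := by
  intro n
  induction n with
  | zero => rw [leg_zero]; simp
  | succ n ih =>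
    have hn : ((n:ℝ)+1) ≠ 0 := by positivity
    have h := congrArg (eval (-1)) (legE n)
    simp only [eval_mul, eval_add, eval_sub, eval_pow, eval_X, eval_one, eval_natCast,
      neg_one_sq, sub_self, zero_mul, mul_one, zero_add] at h
    have h' : ((n:ℝ)+1) * (legendre (n+1)).eval (-1)
        = ((n:ℝ)+1) * (-(legendre n).eval (-1)) := by linarith [h]
    rw [mul_left_cancel₀ hn h', ih]
    ring

private lemma dleg_eval_one : ∀ n : ℕ, (derivative (legendre n)).eval 1 = n*(n+1)/2 := by
  intro n
  induction n with
  | zero => rw [leg_zero]; simp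
  | succ n ih =>
    have h := congrArg (eval 1) (legA n)
    simp only [eval_mul, eval_add, eval_X, eval_natCast, eval_one] at h
    rw [h, ih, leg_eval_one n]
    push_cast
    ring

private lemma dleg_eval_neg_one : ∀ n : ℕ,
    (derivative (legendre n)).eval (-1) = (-1)^(n+1) * (n*(n+1)/2) := by
  intro n
  induction n with
  | zero => rw [leg_zero]; simp
  | succ n ih =>
    have h := congrArg (eval (-1)) (legA n)
    simp only [eval_mul, eval_add, eval_X, eval_natCast, eval_one] at h
    rw [h, ih, leg_eval_neg_one n]
    push_cast
    ring

private lemma gegen_eval_one (m : ℕ) :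
    (gegenbauer32 m).eval 1 = ((m:ℝ)+1)*((m:ℝ)+2)/2 := by
  unfold gegenbauer32
  rw [dleg_eval_one (m+1)]
  push_cast
  ring

private lemma gegen_eval_neg_one (m : ℕ) :
    (gegenbauer32 m).eval (-1) = (-1)^m * (((m:ℝ)+1)*((m:ℝ)+2)/2) := by
  unfold gegenbauer32
  rw [dleg_eval_neg_one (m+1)]
  push_cast
  ring

private lemma gegen_zero : gegenbauer32 0 = 1 := by
  unfold gegenbauer32
  rw [leg_one, derivative_X]

private lemma no_consec : ∀ (m : ℕ) (x : ℝ), (gegenbauer32 m).eval x = 0 →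
    (gegenbauer32 (m+1)).eval x = 0 → False := by
  intro m
  induction m with
  | zero => intro x h0 _; rw [gegen_zero] at h0; simp at h0
  | succ m ih =>
    intro x h1 h2
    have h := congrArg (eval x) (gegenRec m)
    simp only [eval_mul, eval_add, eval_sub, eval_X, eval_natCast, eval_ofNat, h1, h2] at h
    have hm : ((m:ℝ)+3) ≠ 0 := by positivity
    have h3 : ((m:ℝ)+3) * (gegenbauer32 m).eval x = 0 := by linarith [h]
    exact ih x ((mul_eq_zero.mp h3).resolve_left hm) h1

private lemma keyId (k : ℕ) : Spoly (k+2)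
    = (2*(k:ℝ[X])+5) * (1 - X^2) * gegenbauer32 (k+1)
      + ((k:ℝ[X])+2) * X * Rpoly (k+2) := by
  unfold Spoly Rpoly
  simp only [show k+2-1 = k+1 from rfl, show k+2-2 = k from rfl]
  simp only [map_mul, map_add, map_one, map_ofNat, map_natCast]
  push_cast
  linear_combination (-X) * gegenRec k

/-- For `n ≥ 2`, the polynomials `S_n` and `R_n` share no root: at every root `x_i` of `R_n`
one has `S_n(x_i) ≠ 0`, so the weights `w_i = 2(n+1)(2n+1)/(R_n'(x_i)·S_n(x_i))` of formula
(15) are well defined. -/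
theorem stmt_13 (n : ℕ) (hn : 2 ≤ n) :
    ∀ x : ℝ, (Rpoly n).eval x = 0 → (Spoly n).eval x ≠ 0 := by
  obtain ⟨k, rfl⟩ : ∃ k, n = k + 2 := ⟨n - 2, by omega⟩
  intro x hR
  have hδ : 0 ≤ delta (k+2) := Real.sqrt_nonneg _
  have hReval : ∀ y : ℝ, (Rpoly (k+2)).eval y
      = (gegenbauer32 (k+2)).eval y + delta (k+2) * (gegenbauer32 (k+1)).eval y := by
    intro y
    simp [Rpoly, show k+2-1 = k+1 from rfl]
  have hδk : delta (k+2) * ((k:ℝ)+2) < (k:ℝ)+4 := by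
    have h1 : (delta (k+2) * ((k:ℝ)+2))^2 = ((k:ℝ)+4)*((k:ℝ)+2) := by
      rw [mul_pow, delta, Real.sq_sqrt (by positivity)]
      push_cast
      field_simp
      ring
    have h2 : (delta (k+2) * ((k:ℝ)+2))^2 < ((k:ℝ)+4)^2 := by rw [h1]; nlinarith
    exact lt_of_pow_lt_pow_left₀ 2 (by positivity) h2
  have hx1 : x ≠ 1 := by
    intro he
    have h := hReval 1
    rw [gegen_eval_one, gegen_eval_one] at h
    push_cast at h
    have hb := mul_nonneg hδ (show (0:ℝ) ≤ ((k:ℝ)+2)*((k:ℝ)+3)/2 by positivity)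
    have hpos : 0 < (Rpoly (k+2)).eval 1 := by rw [h]; nlinarith
    rw [he] at hR
    linarith [hR, hpos]
  have hxm1 : x ≠ -1 := by
    intro he
    have h := hReval (-1)
    rw [gegen_eval_neg_one, gegen_eval_neg_one] at h
    push_cast at h
    have h' : (Rpoly (k+2)).eval (-1)
        = (-1)^k * (((k:ℝ)+3)*((k:ℝ)+4)/2 - delta (k+2)*(((k:ℝ)+2)*((k:ℝ)+3)/2)) := by
      rw [h]; ring
    have hbr : 0 < ((k:ℝ)+3)*((k:ℝ)+4)/2 - delta (k+2)*(((k:ℝ)+2)*((k:ℝ)+3)/2) := by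
      nlinarith [hδk]
    rw [he, h'] at hR
    rcases mul_eq_zero.mp hR with h0 | h0
    · exact pow_ne_zero k (by norm_num : (-1:ℝ) ≠ 0) h0
    · linarith
  have hG : (gegenbauer32 (k+1)).eval x ≠ 0 := by
    intro h0
    have h := hReval x
    rw [h0, mul_zero, add_zero] at h
    rw [h] at hR
    exact no_consec (k+1) x h0 hR
  have key : (Spoly (k+2)).eval x
      = (2*(k:ℝ)+5) * (1 - x^2) * (gegenbauer32 (k+1)).eval x := by
    rw [keyId k]
    simp only [eval_add, eval_mul, eval_sub, eval_pow, eval_one, eval_X,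
      eval_natCast, eval_ofNat, hR]
    ring
  rw [key]
  have h1x : 1 - x^2 ≠ 0 := by
    intro h
    have hm : (x - 1) * (x + 1) = 0 := by nlinarith [h]
    rcases mul_eq_zero.mp hm with h0 | h0
    · exact hx1 (by linarith)
    · exact hxm1 (by linarith)
  exact mul_ne_zero (mul_ne_zero (by positivity) h1x) hG
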